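/- Distributional consistency is implied by the target-trial assumptions: under the extended positivity, extended randomization, conditional ignorability and extended modularity assumptions, for each t ∈ {0,1} and all x, y, P_E(X=x, Y=y | T^O=t, T=t) = P_O(X=x, Y=y | T=t), provided P_E(T^O=t, T=t) > 0 and P_O(T=t) > 0. -/
import Mathlib


/-!
Extended discrete target-trial setup: `P_O` and `P_E` are probability mass functions on
`𝒴 × Bool × Bool × 𝒳` with coordinates `(Y, T, T^O, X)`; under `P_O` the event `{T = T^O}`
has probability 1.
STATEMENT 8: Distributional consistency is implied by the target-trial assumptions: for each
`t ∈ {0,1}` and all `x, y`,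
`P_E(X=x, Y=y | T^O=t, T=t) = P_O(X=x, Y=y | T=t)`,
provided `P_E(T^O=t, T=t) > 0` and `P_O(T=t) > 0`.
-/

open scoped BigOperators

set_option linter.unusedSectionVars false

noncomputable section

variable {𝒴 𝒳 : Type*} [Countable 𝒴] [Countable 𝒳]

/-- Marginal mass of `X = x` (coordinates are `(Y, T, T^O, X)`). -/
def mX (P : 𝒴 × Bool × Bool × 𝒳 → ℝ) (x : 𝒳) : ℝ :=
  ∑' y : 𝒴, ∑' t : Bool, ∑' t' : Bool, P (y, t, t', x)

/-- Marginal mass of `T = t`. -/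
def mT (P : 𝒴 × Bool × Bool × 𝒳 → ℝ) (t : Bool) : ℝ :=
  ∑' y : 𝒴, ∑' t' : Bool, ∑' x : 𝒳, P (y, t, t', x)

/-- Marginal mass of `T^O = t'`. -/
def mTo (P : 𝒴 × Bool × Bool × 𝒳 → ℝ) (t' : Bool) : ℝ :=
  ∑' y : 𝒴, ∑' t : Bool, ∑' x : 𝒳, P (y, t, t', x)

/-- Joint mass of `T = t, X = x`. -/
def mTX (P : 𝒴 × Bool × Bool × 𝒳 → ℝ) (t : Bool) (x : 𝒳) : ℝ :=
  ∑' y : 𝒴, ∑' t' : Bool, P (y, t, t', x)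

/-- Joint mass of `T^O = t', X = x`. -/
def mToX (P : 𝒴 × Bool × Bool × 𝒳 → ℝ) (t' : Bool) (x : 𝒳) : ℝ :=
  ∑' y : 𝒴, ∑' t : Bool, P (y, t, t', x)

/-- Joint mass of `Y = y, T = t, X = x`. -/
def mYTX (P : 𝒴 × Bool × Bool × 𝒳 → ℝ) (y : 𝒴) (t : Bool) (x : 𝒳) : ℝ :=
  ∑' t' : Bool, P (y, t, t', x)

/-- Joint mass of `T = t, T^O = t', X = x`. -/
def mTToX (P : 𝒴 × Bool × Bool × 𝒳 → ℝ) (t t' : Bool) (x : 𝒳) : ℝ :=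
  ∑' y : 𝒴, P (y, t, t', x)

/-- Joint mass of `T = t, T^O = t'`. -/
def mTTo (P : 𝒴 × Bool × Bool × 𝒳 → ℝ) (t t' : Bool) : ℝ :=
  ∑' y : 𝒴, ∑' x : 𝒳, P (y, t, t', x)

/-- Joint mass of `Y = y, T = t, T^O = t'`. -/
def mYTTo (P : 𝒴 × Bool × Bool × 𝒳 → ℝ) (y : 𝒴) (t t' : Bool) : ℝ :=
  ∑' x : 𝒳, P (y, t, t', x)

section Aux

variable (P : 𝒴 × Bool × Bool × 𝒳 → ℝ)

lemma sum_fiber (hP : Summable P) (t t' : Bool) (x : 𝒳) :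
    Summable fun y : 𝒴 => P (y, t, t', x) :=
  hP.comp_injective (fun a b h => by simpa using h)

lemma sum_yx (hP : Summable P) (t t' : Bool) :
    Summable fun p : 𝒴 × 𝒳 => P (p.1, t, t', p.2) :=
  hP.comp_injective (fun a b h => by
    simp only [Prod.mk.injEq] at h
    exact Prod.ext h.1 h.2.2.2)

lemma sum_xy (hP : Summable P) (t t' : Bool) :
    Summable fun p : 𝒳 × 𝒴 => P (p.2, t, t', p.1) :=
  hP.comp_injective (fun a b h => by
    simp only [Prod.mk.injEq] at h
    exact Prod.ext h.2.2.2 h.1)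

lemma sum_mTToX (hP : Summable P) (t t' : Bool) :
    Summable fun x : 𝒳 => mTToX P t t' x :=
  (HasSum.prod_fiberwise (sum_xy P hP t t').hasSum
    (fun x => (sum_fiber P hP t t' x).hasSum)).summable

lemma sum_fiberX (hP : Summable P) (t t' : Bool) (y : 𝒴) :
    Summable fun x : 𝒳 => P (y, t, t', x) :=
  hP.comp_injective (fun a b h => by simpa using h)

lemma sum_fiberY (hP : Summable P) (t t' : Bool) :
    Summable fun y : 𝒴 => ∑' x : 𝒳, P (y, t, t', x) :=
  (HasSum.prod_fiberwise (sum_yx P hP t t').hasSum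
    (fun y => (sum_fiberX P hP t t' y).hasSum)).summable

lemma mX_nonneg (hnn : ∀ z, 0 ≤ P z) (x : 𝒳) : 0 ≤ mX P x :=
  tsum_nonneg fun _ => tsum_nonneg fun _ => tsum_nonneg fun _ => hnn _

lemma mT_nonneg (hnn : ∀ z, 0 ≤ P z) (t : Bool) : 0 ≤ mT P t :=
  tsum_nonneg fun _ => tsum_nonneg fun _ => tsum_nonneg fun _ => hnn _

lemma mTo_nonneg (hnn : ∀ z, 0 ≤ P z) (t' : Bool) : 0 ≤ mTo P t' :=
  tsum_nonneg fun _ => tsum_nonneg fun _ => tsum_nonneg fun _ => hnn _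

lemma mToX_nonneg (hnn : ∀ z, 0 ≤ P z) (t' : Bool) (x : 𝒳) : 0 ≤ mToX P t' x :=
  tsum_nonneg fun _ => tsum_nonneg fun _ => hnn _

lemma mTToX_nonneg (hnn : ∀ z, 0 ≤ P z) (t t' : Bool) (x : 𝒳) :
    0 ≤ mTToX P t t' x :=
  tsum_nonneg fun _ => hnn _

lemma term_le_mTToX (hnn : ∀ z, 0 ≤ P z) (hP : Summable P) (y : 𝒴) (t t' : Bool) (x : 𝒳) :
    P (y, t, t', x) ≤ mTToX P t t' x :=
  Summable.le_tsum (sum_fiber P hP t t' x) y (fun _ _ => hnn _)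

lemma mYTX_expand (y : 𝒴) (t : Bool) (x : 𝒳) :
    mYTX P y t x = P (y, t, false, x) + P (y, t, true, x) :=
  tsum_bool _

lemma mTX_expand (hP : Summable P) (t : Bool) (x : 𝒳) :
    mTX P t x = mTToX P t false x + mTToX P t true x := by
  unfold mTX mTToX
  rw [show (fun y : 𝒴 => ∑' t' : Bool, P (y, t, t', x))
      = fun y : 𝒴 => P (y, t, false, x) + P (y, t, true, x) from funext fun y => tsum_bool _]
  exact Summable.tsum_add (sum_fiber P hP t false x) (sum_fiber P hP t true x)

lemma mToX_expand (hP : Summable P) (t' : Bool) (x : 𝒳) :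
    mToX P t' x = mTToX P false t' x + mTToX P true t' x := by
  unfold mToX mTToX
  rw [show (fun y : 𝒴 => ∑' t : Bool, P (y, t, t', x))
      = fun y : 𝒴 => P (y, false, t', x) + P (y, true, t', x) from funext fun y => tsum_bool _]
  exact Summable.tsum_add (sum_fiber P hP false t' x) (sum_fiber P hP true t' x)

lemma mX_expand (hP : Summable P) (x : 𝒳) :
    mX P x = (mTToX P false false x + mTToX P false true x)
      + (mTToX P true false x + mTToX P true true x) := by
  unfold mX mTToX
  rw [show (fun y : 𝒴 => ∑' t : Bool, ∑' t' : Bool, P (y, t, t', x))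
      = fun y : 𝒴 => (P (y, false, false, x) + P (y, false, true, x))
        + (P (y, true, false, x) + P (y, true, true, x)) from funext fun y => by
          rw [tsum_bool, tsum_bool, tsum_bool]]
  rw [Summable.tsum_add (((sum_fiber P hP false false x).add (sum_fiber P hP false true x)))
      (((sum_fiber P hP true false x).add (sum_fiber P hP true true x))),
    Summable.tsum_add (sum_fiber P hP false false x) (sum_fiber P hP false true x),
    Summable.tsum_add (sum_fiber P hP true false x) (sum_fiber P hP true true x)]

lemma mX_as_mToX (hP : Summable P) (x : 𝒳) :
    mX P x = mToX P false x + mToX P true x := by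
  rw [mX_expand P hP, mToX_expand P hP, mToX_expand P hP]; ring

lemma mToX_le_mX (hnn : ∀ z, 0 ≤ P z) (hP : Summable P) (t' : Bool) (x : 𝒳) :
    mToX P t' x ≤ mX P x := by
  rw [mX_expand P hP, mToX_expand P hP]
  cases t' <;>
    nlinarith [mTToX_nonneg P hnn false false x, mTToX_nonneg P hnn false true x,
      mTToX_nonneg P hnn true false x, mTToX_nonneg P hnn true true x]

lemma mTToX_le_mX (hnn : ∀ z, 0 ≤ P z) (hP : Summable P) (t t' : Bool) (x : 𝒳) :
    mTToX P t t' x ≤ mX P x := by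
  rw [mX_expand P hP]
  cases t <;> cases t' <;>
    nlinarith [mTToX_nonneg P hnn false false x, mTToX_nonneg P hnn false true x,
      mTToX_nonneg P hnn true false x, mTToX_nonneg P hnn true true x]

lemma mTTo_expand (hP : Summable P) (t t' : Bool) :
    mTTo P t t' = ∑' x : 𝒳, mTToX P t t' x := by
  unfold mTTo mTToX
  exact (Summable.tsum_comm (f := fun (y : 𝒴) (x : 𝒳) => P (y, t, t', x)) (sum_yx P hP t t')).symm

lemma mTo_expand (hP : Summable P) (t' : Bool) :
    mTo P t' = mTTo P false t' + mTTo P true t' := by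
  unfold mTo mTTo
  rw [show (fun y : 𝒴 => ∑' t : Bool, ∑' x : 𝒳, P (y, t, t', x))
      = fun y : 𝒴 => (∑' x : 𝒳, P (y, false, t', x)) + ∑' x : 𝒳, P (y, true, t', x)
      from funext fun y => tsum_bool _]
  exact Summable.tsum_add (sum_fiberY P hP false t') (sum_fiberY P hP true t')

lemma mT_expand (hP : Summable P) (t : Bool) :
    mT P t = mTTo P t false + mTTo P t true := by
  unfold mT mTTo
  rw [show (fun y : 𝒴 => ∑' t' : Bool, ∑' x : 𝒳, P (y, t, t', x))
      = fun y : 𝒴 => (∑' x : 𝒳, P (y, t, false, x)) + ∑' x : 𝒳, P (y, t, true, x)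
      from funext fun y => tsum_bool _]
  exact Summable.tsum_add (sum_fiberY P hP t false) (sum_fiberY P hP t true)

lemma mTo_sum (hP : Summable P) (t' : Bool) :
    mTo P t' = ∑' x : 𝒳, mToX P t' x := by
  rw [mTo_expand P hP, mTTo_expand P hP, mTTo_expand P hP,
    ← Summable.tsum_add (sum_mTToX P hP false t') (sum_mTToX P hP true t')]
  exact tsum_congr fun x => (mToX_expand P hP t' x).symm

end Aux

theorem distributional_consistency_from_target_trial_assumptions
    (P_O P_E : 𝒴 × Bool × Bool × 𝒳 → ℝ)
    (hO_nonneg : ∀ z, 0 ≤ P_O z) (hO_sum : HasSum P_O 1)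
    (hE_nonneg : ∀ z, 0 ≤ P_E z) (hE_sum : HasSum P_E 1)
    -- under `P_O`, `T = T^O` with probability one
    (hTTo : ∀ (y : 𝒴) (t t' : Bool) (x : 𝒳), t ≠ t' → P_O (y, t, t', x) = 0)
    -- Positivity
    (hposE : 0 < mT P_E true ∧ mT P_E true < 1)
    (hposO : ∀ x : 𝒳, 0 < mX P_O x →
      0 < mToX P_O true x / mX P_O x ∧ mToX P_O true x / mX P_O x < 1)
    -- Extended randomization: `T ⫫ (T^O, X)` under `P_E`
    (hrand : ∀ (t t' : Bool) (x : 𝒳), mTToX P_E t t' x = mT P_E t * mToX P_E t' x)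
    -- Conditional ignorability: `Y ⫫ T^O ∣ (T, X)` under `P_E` (cross-multiplied form)
    (hign : ∀ (y : 𝒴) (t t' : Bool) (x : 𝒳),
      P_E (y, t, t', x) * mTX P_E t x = mYTX P_E y t x * mTToX P_E t t' x)
    -- Extended modularity (cross-multiplied forms)
    (hmodY : ∀ (y : 𝒴) (t : Bool) (x : 𝒳),
      mYTX P_E y t x * mTX P_O t x = mYTX P_O y t x * mTX P_E t x)
    (hmodTo : ∀ (t' : Bool) (x : 𝒳),
      mToX P_E t' x * mX P_O x = mToX P_O t' x * mX P_E x)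
    (hmodX : ∀ x : 𝒳, mX P_E x = mX P_O x) :
    ∀ (t : Bool) (x : 𝒳) (y : 𝒴),
      0 < mTTo P_E t t → 0 < mT P_O t →
        P_E (y, t, t, x) / mTTo P_E t t = mYTX P_O y t x / mT P_O t := by
  intro t x y hEpos hOpos
  have hPE : Summable P_E := hE_sum.summable
  have hPO : Summable P_O := hO_sum.summable
  -- P_O lives on the diagonal T = T^O
  have hTToX_O : ∀ (t₁ t₂ : Bool) (x : 𝒳), t₁ ≠ t₂ → mTToX P_O t₁ t₂ x = 0 := by
    intro t₁ t₂ x h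
    unfold mTToX
    rw [show (fun y : 𝒴 => P_O (y, t₁, t₂, x)) = fun _ => (0 : ℝ)
      from funext fun y => hTTo y t₁ t₂ x h]
    exact tsum_zero
  have hmTX_O : ∀ x, mTX P_O t x = mTToX P_O t t x := by
    intro x; rw [mTX_expand P_O hPO]
    cases t <;> simp [hTToX_O]
  have hmToX_O : ∀ x, mToX P_O t x = mTToX P_O t t x := by
    intro x; rw [mToX_expand P_O hPO]
    cases t <;> simp [hTToX_O]
  have hmYTX_O : ∀ y x, mYTX P_O y t x = P_O (y, t, t, x) := by
    intro y x; rw [mYTX_expand]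
    cases t <;> simp [hTTo]
  have hmT_O : mT P_O t = mTTo P_O t t := by
    rw [mT_expand P_O hPO]
    have hz : ∀ t₁ t₂ : Bool, t₁ ≠ t₂ → mTTo P_O t₁ t₂ = 0 := by
      intro t₁ t₂ h
      rw [mTTo_expand P_O hPO]
      rw [show (fun x : 𝒳 => mTToX P_O t₁ t₂ x) = fun _ => (0 : ℝ)
        from funext fun x => hTToX_O t₁ t₂ x h]
      exact tsum_zero
    cases t <;> simp [hz]
  -- P_E structure
  have hmTX_E : ∀ x, mTX P_E t x = mT P_E t * mX P_E x := by
    intro x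
    rw [mTX_expand P_E hPE, hrand, hrand, ← mul_add, mX_as_mToX P_E hPE]
  -- mToX agrees between P_E and P_O
  have hmToX_EO : ∀ (t' : Bool) (x : 𝒳), mToX P_E t' x = mToX P_O t' x := by
    intro t' x
    have h := hmodTo t' x
    rw [hmodX x] at h
    rcases eq_or_lt_of_le (mX_nonneg P_O hO_nonneg x) with h0 | h0
    · have hE0 : mToX P_E t' x = 0 := by
        have h1 := mToX_le_mX P_E hE_nonneg hPE t' x
        rw [hmodX x, ← h0] at h1
        exact le_antisymm h1 (mToX_nonneg P_E hE_nonneg t' x)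
      have hO0 : mToX P_O t' x = 0 := by
        have h1 := mToX_le_mX P_O hO_nonneg hPO t' x
        rw [← h0] at h1
        exact le_antisymm h1 (mToX_nonneg P_O hO_nonneg t' x)
      rw [hE0, hO0]
    · exact mul_right_cancel₀ (ne_of_gt h0) h
  -- mTo under P_E equals mT under P_O
  have hmTo_EO : mTo P_E t = mT P_O t := by
    rw [mTo_sum P_E hPE, hmT_O, mTTo_expand P_O hPO]
    refine tsum_congr fun x => ?_
    rw [hmToX_EO t x, hmToX_O x]
  -- factorization of mTTo P_E t t
  have hsplit : mTTo P_E t t = mT P_E t * mTo P_E t := by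
    rw [mTTo_expand P_E hPE, mTo_sum P_E hPE, ← tsum_mul_left]
    exact tsum_congr fun x => hrand t t x
  have hTnn : (0:ℝ) ≤ mT P_E t := mT_nonneg P_E hE_nonneg t
  have hTpos : 0 < mT P_E t := by
    rcases eq_or_lt_of_le hTnn with h0 | h0
    · rw [hsplit, ← h0, zero_mul] at hEpos; exact absurd hEpos (lt_irrefl 0)
    · exact h0
  -- main case analysis on mX P_O x
  rcases eq_or_lt_of_le (mX_nonneg P_O hO_nonneg x) with hx | hx
  · -- mX P_O x = 0 : both sides vanish
    have hE0 : P_E (y, t, t, x) = 0 := by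
      have h1 := (term_le_mTToX P_E hE_nonneg hPE y t t x).trans
        (mTToX_le_mX P_E hE_nonneg hPE t t x)
      rw [hmodX x, ← hx] at h1
      exact le_antisymm h1 (hE_nonneg _)
    have hO0 : mYTX P_O y t x = 0 := by
      rw [hmYTX_O y x]
      have h1 := (term_le_mTToX P_O hO_nonneg hPO y t t x).trans
        (mTToX_le_mX P_O hO_nonneg hPO t t x)
      rw [← hx] at h1
      exact le_antisymm h1 (hO_nonneg _)
    rw [hE0, hO0, zero_div, zero_div]
  · -- mX P_O x > 0
    have hxne : mX P_O x ≠ 0 := ne_of_gt hx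
    have hToO_true_lt : mToX P_O true x < mX P_O x := by
      have := (hposO x hx).2
      calc mToX P_O true x = mToX P_O true x / mX P_O x * mX P_O x := by
            field_simp
        _ < 1 * mX P_O x := by exact mul_lt_mul_of_pos_right this hx
        _ = mX P_O x := one_mul _
    have hToO_true_pos : 0 < mToX P_O true x := by
      have := (hposO x hx).1
      have h2 : 0 < mToX P_O true x / mX P_O x * mX P_O x := mul_pos this hx
      rwa [div_mul_cancel₀ _ hxne] at h2
    have hToO_pos : 0 < mToX P_O t x := by
      cases t
      · have hsum := mX_as_mToX P_O hPO x
        linarith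
      · exact hToO_true_pos
    -- ignorability consequence
    have h1 := hign y t t x
    rw [hmTX_E x, hrand t t x, hmodX x, hmToX_EO t x] at h1
    -- h1 : P_E (y,t,t,x) * (mT P_E t * mX P_O x) = mYTX P_E y t x * (mT P_E t * mToX P_O t x)
    have hcne : mT P_E t ≠ 0 := ne_of_gt hTpos
    have h1' : P_E (y, t, t, x) * mX P_O x = mYTX P_E y t x * mToX P_O t x :=
      mul_left_cancel₀ hcne (by linear_combination h1)
    -- modularity for Y
    have h2 := hmodY y t x
    rw [hmTX_O x, ← hmToX_O x, hmTX_E x, hmodX x] at h2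
    -- h2 : mYTX P_E y t x * mToX P_O t x = mYTX P_O y t x * (mT P_E t * mX P_O x)
    have key : P_E (y, t, t, x) = mYTX P_O y t x * mT P_E t := by
      have h3 : P_E (y, t, t, x) * mX P_O x = mYTX P_O y t x * mT P_E t * mX P_O x := by
        rw [h1', h2]; ring
      exact mul_right_cancel₀ hxne h3
    rw [hsplit, hmTo_EO, key, mul_comm (mYTX P_O y t x) (mT P_E t),
      mul_div_mul_left _ _ hcne]

end
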